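/- Assume every state of S has an edge to s_f (all states are terminating, S ≡ X), and let the reward be r(s, s') = E(s) − E(s') + α log P_B(s|s') for edges with s' ∈ S and r(s, s_f) = 0. Let π_b be a probability distribution over the edges s → s' of G with s' ∈ S, and define L_{π-SQL} = (1/2) Σ π_b(s, s') Δ_{π-SQL}(s, s')² and L_{M-DB} = (1/2) Σ π_b(s, s') Δ_{M-DB}(s, s')². Then the Soft Q-Learning objective with policy parametrization is proportional to the Modified Detailed Balance objective: L_{π-SQL} = α² L_{M-DB}, with the identification π_θ(s'|s) = P_F(s'|s). -/
import Mathlib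


/-- The π-SQL residual of an edge `s → s'` with `s' ∈ S`:
`Δ_{π-SQL}(s,s') = α (log P_F(s'|s) - log P_F(s_f|s) + log P_F(s_f|s')) - r(s,s')`. -/
noncomputable def deltaPiSQL {V : Type*} (sf : V) (α : ℝ)
    (PF : V → V → ℝ) (r : V → V → ℝ) (s s' : V) : ℝ :=
  α * (Real.log (PF s s') - Real.log (PF s sf) + Real.log (PF s' sf)) - r s s'

/-- The Modified Detailed Balance residual of an edge `s → s'` with `s' ∈ S`:
`Δ_{M-DB}(s,s') = log(exp(-E(s')/α) P_B(s|s') P_F(s_f|s))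
                 - log(exp(-E(s)/α) P_F(s'|s) P_F(s_f|s'))`. -/
noncomputable def deltaMDB {V : Type*} (sf : V) (α : ℝ) (En : V → ℝ)
    (PB PF : V → V → ℝ) (s s' : V) : ℝ :=
  Real.log (Real.exp (-En s' / α) * PB s s' * PF s sf)
    - Real.log (Real.exp (-En s / α) * PF s s' * PF s' sf)

/-- Assume all states are terminating (`S ≡ X`) and the reward is
`r(s,s') = E(s) - E(s') + α log P_B(s|s')` on edges with `s' ∈ S`, `r(s,s_f) = 0`. For any
probability distribution `π_b` over the edges `s → s'` with `s' ∈ S`, the Soft Q-Learning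
objective with policy parametrization is proportional to the Modified Detailed Balance
objective: `L_{π-SQL} = α² L_{M-DB}`, with the identification `π_θ = P_F`. -/
theorem pi_sql_loss_eq_modified_db_loss
    {V : Type*} [Fintype V] [DecidableEq V]
    (E : V → V → Prop) [DecidableRel E] (s0 sf : V)
    (hacyc : ∀ v : V, ¬ Relation.TransGen E v v)
    (hsink : ∀ v : V, ¬ E sf v)
    (hreach : ∀ v : V, Relation.ReflTransGen E s0 v)
    (α : ℝ) (hα : 0 < α)
    (En : V → ℝ)
    (PB : V → V → ℝ)
    (hPBpos : ∀ s s' : V, E s s' → s' ≠ sf → 0 < PB s s')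
    (hPBsum : ∀ s' : V, s' ≠ sf → s' ≠ s0 →
      ∑ s ∈ Finset.univ.filter (fun s => E s s'), PB s s' = 1)
    (PF : V → V → ℝ) (hPFpos : ∀ s s' : V, E s s' → 0 < PF s s')
    (hterm : ∀ s : V, s ≠ sf → E s sf)
    (r : V → V → ℝ)
    (hr : ∀ s s' : V, E s s' → s' ≠ sf →
      r s s' = En s - En s' + α * Real.log (PB s s'))
    (hrf : ∀ s : V, s ≠ sf → r s sf = 0)
    -- π_b : a probability distribution over the edges s → s' with s' ∈ S
    (πb : V → V → ℝ)
    (hπb_nonneg : ∀ s s' : V, 0 ≤ πb s s')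
    (hπb_supp : ∀ s s' : V, πb s s' ≠ 0 → E s s' ∧ s' ≠ sf)
    (hπb_sum : ∑ s : V, ∑ s' : V, πb s s' = 1) :
    (1 / 2) * (∑ s : V, ∑ s' : V, πb s s' * (deltaPiSQL sf α PF r s s') ^ 2)
      = α ^ 2 * ((1 / 2) *
          ∑ s : V, ∑ s' : V, πb s s' * (deltaMDB sf α En PB PF s s') ^ 2) := by
  have key : ∀ s s' : V, πb s s' * (deltaPiSQL sf α PF r s s') ^ 2
      = πb s s' * (α ^ 2 * (deltaMDB sf α En PB PF s s') ^ 2) := by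
    intro s s'
    by_cases h : πb s s' = 0
    · simp [h]
    · obtain ⟨hE, hs'⟩ := hπb_supp s s' h
      have hs : s ≠ sf := fun hh => hsink s' (hh ▸ hE)
      have hPF1 : 0 < PF s s' := hPFpos s s' hE
      have hPF2 : 0 < PF s sf := hPFpos s sf (hterm s hs)
      have hPF3 : 0 < PF s' sf := hPFpos s' sf (hterm s' hs')
      have hPB : 0 < PB s s' := hPBpos s s' hE hs'
      have hδ : deltaPiSQL sf α PF r s s' = -(α * deltaMDB sf α En PB PF s s') := by
        rw [deltaPiSQL, deltaMDB, hr s s' hE hs']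
        rw [Real.log_mul (by positivity) (ne_of_gt hPF2),
            Real.log_mul (Real.exp_ne_zero _) (ne_of_gt hPB),
            Real.log_mul (by positivity) (ne_of_gt hPF3),
            Real.log_mul (Real.exp_ne_zero _) (ne_of_gt hPF1),
            Real.log_exp, Real.log_exp]
        field_simp
        ring
      rw [hδ]
      ring
  have hsum : (∑ s : V, ∑ s' : V, πb s s' * (deltaPiSQL sf α PF r s s') ^ 2)
      = ∑ s : V, ∑ s' : V, πb s s' * (α ^ 2 * (deltaMDB sf α En PB PF s s') ^ 2) := by
    exact Finset.sum_congr rfl fun s _ => Finset.sum_congr rfl fun s' _ => key s s'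
  rw [hsum]
  simp only [Finset.mul_sum]
  exact Finset.sum_congr rfl fun s _ => Finset.sum_congr rfl fun s' _ => by ring
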